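/- Let v₁,…,v_k ∈ ℝⁿ. Then exactly one of the following holds: (1) there exist positive real constants λ₁,…,λ_k such that ∑ᵢ λᵢ vᵢ = 0; (2) there exists w ∈ ℝⁿ such that w·vᵢ ≤ 0 for all i and w·vⱼ < 0 for some j. -/

import Mathlib

open scoped BigOperators

/-- **Stiemke's theorem**: for vectors `v 1, …, v k` in `ℝⁿ`, exactly one of the
following holds: (1) there exist positive reals `λ i` with `∑ i, λ i • v i = 0`;
(2) there exists `w` with `w · v i ≤ 0` for all `i` and `w · v j < 0` for some `j`. -/
theorem stiemke (n k : ℕ) (hk : 1 ≤ k) (v : Fin k → (Fin n → ℝ)) :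
    Xor'
      (∃ lam : Fin k → ℝ, (∀ i, 0 < lam i) ∧ ∑ i, lam i • v i = 0)
      (∃ w : Fin n → ℝ, (∀ i, ∑ j, w j * v i j ≤ 0) ∧ ∃ i, ∑ j, w j * v i j < 0) := by
  set P1 := (∃ lam : Fin k → ℝ, (∀ i, 0 < lam i) ∧ ∑ i, lam i • v i = 0) with hP1
  set P2 := (∃ w : Fin n → ℝ, (∀ i, ∑ j, w j * v i j ≤ 0) ∧ ∃ i, ∑ j, w j * v i j < 0)
    with hP2
  -- not both
  have hnb : ¬ (P1 ∧ P2) := by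
    rintro ⟨⟨lam, hlam, hsum⟩, ⟨w, hw, i₀, hi₀⟩⟩
    have key : ∑ i, lam i * (∑ j, w j * v i j) = 0 := by
      have := congrArg (fun x : Fin n → ℝ => ∑ j, w j * x j) hsum
      simp only [Pi.zero_apply, Finset.sum_apply, Pi.smul_apply, smul_eq_mul,
        mul_zero, Finset.sum_const_zero] at this
      rw [← this]
      calc ∑ i, lam i * ∑ j, w j * v i j
          = ∑ i, ∑ j, lam i * (w j * v i j) := by
            exact Finset.sum_congr rfl fun i _ => Finset.mul_sum _ _ _
        _ = ∑ j, ∑ i, lam i * (w j * v i j) := Finset.sum_comm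
        _ = ∑ j, w j * ∑ i, lam i * v i j := by
            refine Finset.sum_congr rfl fun j _ => ?_
            rw [Finset.mul_sum]
            exact Finset.sum_congr rfl fun i _ => by ring
    have hlt : ∑ i, lam i * (∑ j, w j * v i j) < 0 := by
      apply Finset.sum_neg' (fun i _ => mul_nonpos_of_nonneg_of_nonpos (hlam i).le (hw i))
      exact ⟨i₀, Finset.mem_univ i₀, mul_neg_of_pos_of_neg (hlam i₀) hi₀⟩
    exact absurd key (ne_of_lt hlt)
  -- the hard direction
  have hmain : ¬ P2 → P1 := by
    intro h2
    -- the linear map B : w ↦ (w · v i)_i and its range T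
    let B : (Fin n → ℝ) →ₗ[ℝ] (Fin k → ℝ) :=
      { toFun := fun w i => ∑ j, w j * v i j
        map_add' := by intro x y; funext i; simp [add_mul, Finset.sum_add_distrib]
        map_smul' := by intro c x; funext i; simp [Finset.mul_sum, mul_assoc] }
    let T : Submodule ℝ (Fin k → ℝ) := LinearMap.range B
    have hTclosed : IsClosed (T : Set (Fin k → ℝ)) := T.closed_of_finiteDimensional
    have hdisj : Disjoint (stdSimplex ℝ (Fin k)) (T : Set (Fin k → ℝ)) := by
      rw [Set.disjoint_left]
      rintro y ⟨hy0, hy1⟩ ⟨w, rfl⟩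
      apply h2
      refine ⟨-w, fun i => ?_, ?_⟩
      · have : ∑ j, (-w) j * v i j = -(B w i) := by simp [B, Finset.sum_neg_distrib]
        rw [this]; exact neg_nonpos_of_nonneg (hy0 i)
      · have hpos : ∃ i, 0 < B w i := by
          by_contra hc
          push_neg at hc
          have : ∑ i, B w i ≤ 0 := Finset.sum_nonpos (fun i _ => hc i)
          rw [hy1] at this; linarith
        obtain ⟨i, hi⟩ := hpos
        refine ⟨i, ?_⟩
        have : ∑ j, (-w) j * v i j = -(B w i) := by simp [B, Finset.sum_neg_distrib]
        rw [this]; linarith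
    obtain ⟨f, u, u', hfs, huu', hft⟩ :=
      geometric_hahn_banach_compact_closed (convex_stdSimplex ℝ (Fin k))
        (isCompact_stdSimplex ℝ (Fin k)) T.convex hTclosed hdisj
    -- f vanishes on T
    have hfT : ∀ y ∈ T, f y = 0 := by
      intro y hy
      by_contra hne
      have := hft ((u' / f y) • y) (T.smul_mem _ hy)
      rw [map_smul, smul_eq_mul, div_mul_cancel₀ _ hne] at this
      exact lt_irrefl _ this
    have hu0 : u < 0 := by
      have := hft 0 T.zero_mem
      rw [map_zero] at this; linarith
    -- f on basis vectors is negative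
    set e : Fin k → (Fin k → ℝ) := fun i j => if i = j then 1 else 0 with he
    have hei : ∀ i, e i ∈ stdSimplex ℝ (Fin k) := by
      intro i
      constructor
      · intro j; simp [e]; split <;> norm_num
      · simp [e]
    have hfe : ∀ i, f (e i) < 0 := fun i => lt_trans (hfs _ (hei i)) hu0
    refine ⟨fun i => -f (e i), fun i => neg_pos.mpr (hfe i), ?_⟩
    -- f (B w) = 0 for all w gives the conclusion
    funext j
    set d : Fin n → (Fin n → ℝ) := fun a b => if a = b then 1 else 0 with hd
    have hBe : ∀ j : Fin n, f (B (d j)) = 0 := fun j => hfT _ ⟨d j, rfl⟩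
    have hexp : ∀ y : Fin k → ℝ, f y = ∑ i, y i * f (e i) := by
      intro y
      conv_lhs => rw [pi_eq_sum_univ y]
      rw [map_sum]
      congr 1; funext i; rw [map_smul]; simp [e]
    have := hBe j
    rw [hexp] at this
    have hBej : ∀ i, B (d j) i = v i j := by
      intro i; simp [B, d]
    simp only [hBej] at this
    simp only [Finset.sum_apply, Pi.smul_apply, smul_eq_mul, Pi.zero_apply]
    calc ∑ i, -f (e i) * v i j = -∑ i, v i j * f (e i) := by
          rw [← Finset.sum_neg_distrib]; congr 1; funext i; ring
      _ = 0 := by rw [this, neg_zero]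
  by_cases h2 : P2
  · exact Or.inr ⟨h2, fun h1 => hnb ⟨h1, h2⟩⟩
  · exact Or.inl ⟨hmain h2, h2⟩
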